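/- arXiv:1105.5686 — 2 statements merged into one kernel-verified Lean document; each statement's English description precedes it below -/
import Mathlib

section
/- Let n ≥ 2 be an integer, c < 0, and let α, β be real numbers with α ≤ 4/(3n) if n ∈ {2,3}, α ≤ 1/(n-1) if n ≥ 4, and α > 1/n; and β ≥ n/2 if n ∈ {2,3}, β ≥ 2 if n ≥ 4. Then for all real x, y ≥ 0 (representing |Å_H|² and |Å_I|²), the expression (6 - 2/(n(α-1/n)))·x·y + (3 - 2/(n(α-1/n)))·y² + (2β - 4n + 2β/(n(α-1/n)))·c·x + 4(β/(n(α-1/n)) - n)·c·y - 2β(β/(n(α-1/n)) - n)·c² is nonpositive. -/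
lemma aux5 (N β c x y d : ℝ) (hc : c < 0) (hx : 0 ≤ x) (hy : 0 ≤ y)
    (hd3 : 3 ≤ d) (hbd : N ≤ β * d) (hb1d : 2 * N ≤ β * (1 + d)) (hb : 0 < β) :
    (6 - 2 * d) * x * y + (3 - 2 * d) * y ^ 2
      + (2 * β - 4 * N + 2 * (β * d)) * c * x
      + 4 * (β * d - N) * c * y - 2 * β * (β * d - N) * c ^ 2 ≤ 0 := by
  have hxy : 0 ≤ x * y := mul_nonneg hx hy
  have hcx : 0 ≤ (-c) * x := mul_nonneg (by linarith) hx
  have hcy : 0 ≤ (-c) * y := mul_nonneg (by linarith) hy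
  have t1 : (6 - 2 * d) * x * y ≤ 0 := by nlinarith
  have t2 : (3 - 2 * d) * y ^ 2 ≤ 0 := by nlinarith [sq_nonneg y]
  have t3 : (2 * β - 4 * N + 2 * (β * d)) * c * x ≤ 0 := by nlinarith
  have t4 : 4 * (β * d - N) * c * y ≤ 0 := by nlinarith
  have t5 : 0 ≤ 2 * β * (β * d - N) * c ^ 2 :=
    mul_nonneg (mul_nonneg (by linarith) (by linarith)) (sq_nonneg c)
  linarith

theorem stmt5 (n : ℕ) (hn : 2 ≤ n) (c α β : ℝ) (hc : c < 0)
    (hα23 : n = 2 ∨ n = 3 → α ≤ 4 / (3 * (n : ℝ)))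
    (hα4 : 4 ≤ n → α ≤ 1 / ((n : ℝ) - 1))
    (hαn : 1 / (n : ℝ) < α)
    (hβ23 : n = 2 ∨ n = 3 → (n : ℝ) / 2 ≤ β)
    (hβ4 : 4 ≤ n → (2 : ℝ) ≤ β)
    (x y : ℝ) (hx : 0 ≤ x) (hy : 0 ≤ y) :
    (6 - 2 / ((n : ℝ) * (α - 1 / (n : ℝ)))) * x * y
      + (3 - 2 / ((n : ℝ) * (α - 1 / (n : ℝ)))) * y ^ 2
      + (2 * β - 4 * (n : ℝ) + 2 * β / ((n : ℝ) * (α - 1 / (n : ℝ)))) * c * x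
      + 4 * (β / ((n : ℝ) * (α - 1 / (n : ℝ))) - (n : ℝ)) * c * y
      - 2 * β * (β / ((n : ℝ) * (α - 1 / (n : ℝ))) - (n : ℝ)) * c ^ 2 ≤ 0 := by
  have hN : (2:ℝ) ≤ (n:ℝ) := by exact_mod_cast hn
  have hNpos : (0:ℝ) < (n:ℝ) := by linarith
  have hkN : (n:ℝ) * (α - 1/(n:ℝ)) = (n:ℝ) * α - 1 := by field_simp
  rw [hkN]
  obtain ⟨k, hkdef⟩ : ∃ k : ℝ, k = (n:ℝ) * α - 1 := ⟨_, rfl⟩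
  rw [← hkdef]
  have hk : 0 < k := by
    rw [hkdef]
    have : 1/(n:ℝ) < α := hαn
    rw [div_lt_iff₀ hNpos] at this
    linarith
  obtain ⟨d, hdk⟩ : ∃ d : ℝ, d = 1/k := ⟨_, rfl⟩
  have hdpos : 0 < d := by rw [hdk]; positivity
  have hkd : k * d = 1 := by rw [hdk]; field_simp
  have e1 : 2 / k = 2 * d := by rw [hdk]; ring
  have e2 : 2 * β / k = 2 * (β * d) := by rw [hdk]; ring
  have e3 : β / k = β * d := by rw [hdk]; ring
  rw [e1, e2, e3]
  have key : 3 ≤ d ∧ (n:ℝ) ≤ β * d ∧ 2 * (n:ℝ) ≤ β * (1 + d) ∧ 0 < β := by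
    rcases lt_or_ge n 4 with h4 | h4
    · have hn23 : n = 2 ∨ n = 3 := by omega
      have hα := hα23 hn23
      have hβ := hβ23 hn23
      rw [le_div_iff₀ (by positivity : (0:ℝ) < 3 * (n:ℝ))] at hα
      have hk3 : k ≤ 1/3 := by rw [hkdef]; nlinarith
      have hd3 : 3 ≤ d := by
        have h2 := mul_le_mul_of_nonneg_right hk3 hdpos.le
        rw [hkd] at h2
        linarith
      have hβpos : 0 < β := by linarith
      refine ⟨hd3, ?_, ?_, hβpos⟩
      · have h2 : ((n:ℝ)/2) * 3 ≤ β * d :=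
          mul_le_mul hβ hd3 (by norm_num) (by linarith)
        linarith
      · have h2 : ((n:ℝ)/2) * 4 ≤ β * (1 + d) :=
          mul_le_mul hβ (by linarith) (by norm_num) (by linarith)
        linarith
    · have hα := hα4 h4
      have hβ := hβ4 h4
      have hN4 : (4:ℝ) ≤ (n:ℝ) := by exact_mod_cast h4
      have h1 : (0:ℝ) < (n:ℝ) - 1 := by linarith
      rw [le_div_iff₀ h1] at hα
      have hkle : k * ((n:ℝ) - 1) ≤ 1 := by rw [hkdef]; nlinarith
      have hdN : (n:ℝ) - 1 ≤ d := by
        have h2 := mul_le_mul_of_nonneg_right hkle hdpos.le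
        have h3 : k * ((n:ℝ) - 1) * d = ((n:ℝ) - 1) * (k * d) := by ring
        rw [hkd, mul_one] at h3
        rw [h3, one_mul] at h2
        exact h2
      have hd3 : 3 ≤ d := by linarith
      refine ⟨hd3, ?_, ?_, by linarith⟩
      · have h2 : 2 * ((n:ℝ) - 1) ≤ β * d :=
          mul_le_mul hβ hdN (by linarith) (by linarith)
        linarith
      · have h2 : 2 * (1 + ((n:ℝ) - 1)) ≤ β * (1 + d) :=
          mul_le_mul hβ (by linarith) (by linarith) (by linarith)
        linarith
  obtain ⟨hd3, hbd, hb1d, hbpos⟩ := key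
  exact aux5 (n:ℝ) β c x y d hc hx hy hd3 hbd hb1d hbpos
end

section
/- Let n ≥ 2, c < 0, ε ∈ (0,1), and α_ε ≤ 4/(3n) (n ∈ {2,3}) or α_ε ≤ 1/(n-1) (n ≥ 4), β_ε ≥ n/2(1+ε) or 2(1+ε) respectively. If |A|² ≤ α_ε|H|² + β_ε c and |A|² ≥ |H|²/n, then (1/2)(1/(n-1) - α_ε)|H|² + (1/2)(2 - β_ε)c ≥ ε₀|H|² for some constant ε₀ > 0 depending only on n and ε — i.e. the sectional-curvature lower bound K_min ≥ (1/2)(1/(n-1) - α_ε)|H|² + (1/2)(2-β_ε)c is bounded below by ε₀|H|². -/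
theorem stmt19 (n : ℕ) (hn : 2 ≤ n) (ε : ℝ) (hε0 : 0 < ε) (hε1 : ε < 1)
    (αε βε : ℝ)
    (h23 : n = 2 ∨ n = 3 →
      αε = 4 / (3 * (n : ℝ) + (n : ℝ) * ε) ∧ βε = ((n : ℝ) / 2) * (1 + ε))
    (h4 : 4 ≤ n → αε = 1 / ((n : ℝ) - 1 + ε) ∧ βε = 2 * (1 + ε)) :
    ∃ ε₀ > 0, ∀ c : ℝ, c < 0 → ∀ h A2 : ℝ, 0 ≤ h →
      A2 ≤ αε * h + βε * c → h / (n : ℝ) ≤ A2 →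
      (1 / 2) * (1 / ((n : ℝ) - 1) - αε) * h + (1 / 2) * (2 - βε) * c ≥ ε₀ * h := by
  have hcase : n = 2 ∨ n = 3 ∨ 4 ≤ n := by omega
  rcases hcase with rfl | rfl | hge
  · -- n = 2
    obtain ⟨ha, hb⟩ := h23 (Or.inl rfl)
    have hd : (0:ℝ) < 6 + 2 * ε := by linarith
    have hα : αε * (6 + 2*ε) = 4 := by
      rw [ha]; push_cast; rw [div_mul_eq_mul_div, div_eq_iff (by linarith)]; ring
    have hβ : βε = 1 + ε := by rw [hb]; push_cast; ring
    refine ⟨1/32, by norm_num, ?_⟩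
    intro c hc h A2 hh hA2 hhA
    have key : h / 2 ≤ αε * h + βε * c := by
      refine le_trans ?_ hA2
      have : ((2:ℕ):ℝ) = 2 := by norm_num
      rw [this] at hhA; exact hhA
    rw [hβ] at key
    have hcast : ((2:ℕ):ℝ) = 2 := by norm_num
    rw [hcast, hβ]
    norm_num
    nlinarith [mul_le_mul_of_nonneg_left key (by linarith : (0:ℝ) ≤ 1 - ε),
      mul_nonneg hh hε0.le, mul_nonneg (mul_nonneg hh hε0.le) hε0.le, hα,
      mul_pos hε0 (neg_pos.mpr hc)]
  · -- n = 3
    obtain ⟨ha, hb⟩ := h23 (Or.inr rfl)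
    have hα : αε * (9 + 3*ε) = 4 := by
      rw [ha]; push_cast; rw [div_mul_eq_mul_div, div_eq_iff (by linarith)]; ring
    have hβ : βε = (3/2) * (1 + ε) := by rw [hb]; push_cast; ring
    refine ⟨1/288, by norm_num, ?_⟩
    intro c hc h A2 hh hA2 hhA
    have key : h / 3 ≤ αε * h + βε * c := by
      refine le_trans ?_ hA2
      have : ((3:ℕ):ℝ) = 3 := by norm_num
      rw [this] at hhA; exact hhA
    rw [hβ] at key
    have hcast : ((3:ℕ):ℝ) = 3 := by norm_num
    rw [hcast, hβ]
    norm_num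
    rcases le_or_gt (3*ε) 1 with hle | hlt
    · nlinarith [mul_le_mul_of_nonneg_left key (by linarith : (0:ℝ) ≤ 1 - 3*ε),
        mul_nonneg hh hε0.le, mul_nonneg (mul_nonneg hh hε0.le) hε0.le, hα,
        mul_pos hε0 (neg_pos.mpr hc)]
    · nlinarith [mul_nonneg hh hε0.le, mul_nonneg (mul_nonneg hh hε0.le) hε0.le, hα,
        mul_pos hε0 (neg_pos.mpr hc), mul_pos (by linarith : (0:ℝ) < 3*ε - 1) (neg_pos.mpr hc)]
  · -- n ≥ 4
    obtain ⟨ha, hb⟩ := h4 hge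
    have hm : (4:ℝ) ≤ (n:ℝ) := by exact_mod_cast hge
    have h1 : (0:ℝ) < (n:ℝ) - 1 := by linarith
    have h2 : (0:ℝ) < (n:ℝ) - 1 + ε := by linarith
    refine ⟨(1/2) * (1/((n:ℝ)-1) - 1/((n:ℝ)-1+ε)), ?_, ?_⟩
    · have : 1/((n:ℝ)-1+ε) < 1/((n:ℝ)-1) := by
        apply one_div_lt_one_div_of_lt h1; linarith
      linarith
    · intro c hc h A2 hh hA2 hhA
      rw [ha, hb]
      have : (1/2) * (2 - 2*(1+ε)) * c = ε * (-c) := by ring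
      nlinarith [mul_pos hε0 (neg_pos.mpr hc)]
end
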